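/- Let M be a structure and A ⊆ M an atomic subset (every finite tuple from A realizes a type isolated in Th(M)). Then the algebraic closure acl(A) in M is also atomic: every finite tuple from acl(A) realizes an isolated type in Th(M). -/

import Mathlib

open FirstOrder FirstOrder.Language

/-- A formula (in `n` free variables) is consistent with the theory `T` if it is realized by
some tuple in some model of `T`. -/
def ConsistentWith {L : FirstOrder.Language.{0,0}} (T : L.Theory) {n : ℕ} (φ : L.Formula (Fin n)) : Prop :=
  ∃ (M : Theory.ModelType.{0,0,0} T) (v : Fin n → M), φ.Realize v

/-- `φ` isolates a complete type in `T`: `T ∪ {∃x̄ φ}` is consistent, and for every formula `ψ`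
in the same variables, either `T ⊢ φ → ψ` or `T ⊢ φ → ¬ψ` (semantically). -/
def Isolates {L : FirstOrder.Language.{0,0}} (T : L.Theory) {n : ℕ} (φ : L.Formula (Fin n)) : Prop :=
  ConsistentWith T φ ∧
    ∀ ψ : L.Formula (Fin n),
      (∀ (M : Theory.ModelType.{0,0,0} T) (v : Fin n → M), φ.Realize v → ψ.Realize v) ∨
      (∀ (M : Theory.ModelType.{0,0,0} T) (v : Fin n → M), φ.Realize v → ¬ ψ.Realize v)

/-- The isolated types are dense in `T`: every formula consistent with `T` is implied, modulo
`T`, by a formula isolating a complete type. -/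
def IsolatedTypesDense {L : FirstOrder.Language.{0,0}} (T : L.Theory) : Prop :=
  ∀ (n : ℕ) (φ : L.Formula (Fin n)), ConsistentWith T φ →
    ∃ θ : L.Formula (Fin n), Isolates T θ ∧
      ∀ (M : Theory.ModelType.{0,0,0} T) (v : Fin n → M), θ.Realize v → φ.Realize v

/-- `M` is an atomic model of `T`: `M ⊨ T` and the type of every finite tuple from `M`
is isolated in `T`. -/
def IsAtomicModel {L : FirstOrder.Language.{0,0}} (T : L.Theory) (M : Type*) [L.Structure M] : Prop :=
  M ⊨ T ∧ ∀ (n : ℕ) (a : Fin n → M), ∃ φ : L.Formula (Fin n), φ.Realize a ∧ Isolates T φ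

/-- `A` is an atomic subset of `M`: every finite tuple from `A` realizes a type isolated
in `Th(M)`. -/
def IsAtomicSet (L : FirstOrder.Language.{0,0}) (M : Type) [L.Structure M] (A : Set M) : Prop :=
  ∀ (n : ℕ) (a : Fin n → M), (∀ i, a i ∈ A) →
    ∃ φ : L.Formula (Fin n), φ.Realize a ∧ Isolates (L.completeTheory M) φ

/-- `b` is in the algebraic closure of `A` in `M`: `b` satisfies a formula with parameters
from `A` having only finitely many solutions in `M`. -/
def InAcl (L : FirstOrder.Language.{0,0}) (M : Type) [L.Structure M] (A : Set M) (b : M) : Prop :=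
  ∃ (n : ℕ) (φ : L.Formula (Fin (n + 1))) (a : Fin n → M),
    (∀ i, a i ∈ A) ∧ φ.Realize (Fin.snoc a b) ∧
      {x : M | φ.Realize (Fin.snoc a x)}.Finite

section Old

/-- Old-style universal quantification over the `γ`-part of a relabelling. -/
noncomputable def iAllsOld {L : FirstOrder.Language.{0,0}} {α β γ : Type} [Finite γ]
    (f : α → β ⊕ γ) (φ : L.Formula α) : L.Formula β :=
  Formula.iAlls γ (φ.relabel f)

theorem realize_iAllsOld {L : FirstOrder.Language.{0,0}} {α β γ : Type} [Finite γ]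
    {f : α → β ⊕ γ} {φ : L.Formula α} {N : Type} [L.Structure N] {v : β → N} :
    (iAllsOld f φ).Realize v ↔ ∀ i : γ → N, φ.Realize (fun a => Sum.elim v i (f a)) := by
  rw [iAllsOld, Formula.realize_iAlls]
  simp only [Formula.realize_relabel]
  rfl

/-- Old-style existential quantification over the `γ`-part of a relabelling. -/
noncomputable def iExsOld {L : FirstOrder.Language.{0,0}} {α β γ : Type} [Finite γ]
    (f : α → β ⊕ γ) (φ : L.Formula α) : L.Formula β :=
  Formula.iExs γ (φ.relabel f)

theorem realize_iExsOld {L : FirstOrder.Language.{0,0}} {α β γ : Type} [Finite γ]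
    {f : α → β ⊕ γ} {φ : L.Formula α} {N : Type} [L.Structure N] {v : β → N} :
    (iExsOld f φ).Realize v ↔ ∃ i : γ → N, φ.Realize (fun a => Sum.elim v i (f a)) := by
  rw [iExsOld, Formula.realize_iExs]
  simp only [Formula.realize_relabel]
  rfl

end Old

section Step
variable {L : FirstOrder.Language.{0,0}} {M : Type} [L.Structure M] [Nonempty M]

/-- The step lemma: appending an element algebraic over an isolated tuple keeps the type
isolated. -/
theorem step_lemma {k : ℕ} (c : Fin k → M) (θ : L.Formula (Fin k))
    (hθc : θ.Realize c) (hθ : Isolates (L.completeTheory M) θ)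
    (x : M) (φ : L.Formula (Fin (k+1))) (hφ : φ.Realize (Fin.snoc c x))
    (hfin : {y : M | φ.Realize (Fin.snoc c y)}.Finite) :
    ∃ Φ : L.Formula (Fin (k+1)), Φ.Realize (Fin.snoc c x) ∧
      Isolates (L.completeTheory M) Φ := by
  classical
  set T := L.completeTheory M with hT
  let sep : M → L.Formula (Fin (k+1)) := fun s =>
    if h : ∃ ψ : L.Formula (Fin (k+1)), ψ.Realize (Fin.snoc c x) ∧ ¬ ψ.Realize (Fin.snoc c s)
    then h.choose else ⊤
  let σ : L.Formula (Fin (k+1)) := Formula.iInf (fun s : hfin.toFinset => sep s)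
  have hσ_iff : ∀ (y : M), σ.Realize (Fin.snoc c y) ↔
      ∀ s ∈ hfin.toFinset, (sep s).Realize (Fin.snoc c y) := by
    intro y
    show BoundedFormula.Realize (BoundedFormula.iInf _) _ _ ↔ _
    rw [BoundedFormula.realize_iInf]
    exact ⟨fun h s hs => h ⟨s, hs⟩, fun h s => h s.1 s.2⟩
  have hσx : σ.Realize (Fin.snoc c x) := by
    rw [hσ_iff]
    intro s _
    by_cases h : ∃ ψ : L.Formula (Fin (k+1)), ψ.Realize (Fin.snoc c x) ∧ ¬ ψ.Realize (Fin.snoc c s)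
    · simpa only [sep, dif_pos h] using h.choose_spec.1
    · simp only [sep, dif_neg h, Formula.realize_top]
  have key2 : ∀ y : M, φ.Realize (Fin.snoc c y) → σ.Realize (Fin.snoc c y) →
      ∀ ψ : L.Formula (Fin (k+1)), ψ.Realize (Fin.snoc c x) → ψ.Realize (Fin.snoc c y) := by
    intro y hy1 hy2 ψ hψ
    by_contra hcon
    have hex : ∃ ψ : L.Formula (Fin (k+1)), ψ.Realize (Fin.snoc c x) ∧
        ¬ ψ.Realize (Fin.snoc c y) := ⟨ψ, hψ, hcon⟩
    have := (hσ_iff y).1 hy2 y (hfin.mem_toFinset.2 hy1)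
    rw [show sep y = hex.choose from dif_pos hex] at this
    exact hex.choose_spec.2 this
  have hΦx : ((θ.relabel Fin.castSucc) ⊓ (φ ⊓ σ)).Realize (Fin.snoc c x) := by
    refine Formula.realize_inf.2 ⟨?_, Formula.realize_inf.2 ⟨hφ, hσx⟩⟩
    rw [Formula.realize_relabel]
    have : (Fin.snoc c x : Fin (k+1) → M) ∘ Fin.castSucc = c := by
      funext i; simp [Fin.snoc_castSucc]
    rwa [this]
  refine ⟨(θ.relabel Fin.castSucc) ⊓ (φ ⊓ σ), hΦx, ?_⟩
  constructor
  · exact ⟨Theory.ModelType.of T M, Fin.snoc c x, hΦx⟩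
  · have main : ∀ ψ : L.Formula (Fin (k+1)), ψ.Realize (Fin.snoc c x) →
        ∀ (N : Theory.ModelType.{0,0,0} T) (v : Fin (k+1) → N),
          ((θ.relabel Fin.castSucc) ⊓ (φ ⊓ σ)).Realize v → ψ.Realize v := by
      intro ψ hψ N v hv
      let f : Fin (k+1) → (Fin k) ⊕ (Fin 1) :=
        fun j => Fin.lastCases (Sum.inr 0) (fun i => Sum.inl i) j
      let δ : L.Formula (Fin k) := iAllsOld f ((φ ⊓ σ).imp ψ)
      have hδ_iff : ∀ (N' : Type) [L.Structure N'] (u : Fin k → N'),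
          δ.Realize u ↔ ∀ z : N', (φ ⊓ σ).Realize (Fin.snoc u z) → ψ.Realize (Fin.snoc u z) := by
        intro N' _ u
        rw [realize_iAllsOld]
        constructor
        · intro h z
          have := h (fun _ => z)
          have heq : (fun a => Sum.elim u (fun _ => z) (f a)) = Fin.snoc u z := by
            funext q
            refine Fin.lastCases ?_ ?_ q
            · simp [f, Fin.snoc_last]
            · intro p; simp [f, Fin.snoc_castSucc]
          rw [heq, Formula.realize_imp] at this
          exact this
        · intro h w
          have heq : (fun a => Sum.elim u w (f a)) = Fin.snoc u (w 0) := by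
            funext q
            refine Fin.lastCases ?_ ?_ q
            · simp [f, Fin.snoc_last]
            · intro p; simp [f, Fin.snoc_castSucc]
          rw [heq, Formula.realize_imp]
          exact h (w 0)
      have hδc : δ.Realize c := by
        rw [hδ_iff]
        intro z hz
        rw [Formula.realize_inf] at hz
        exact key2 z hz.1 hz.2 ψ hψ
      rcases hθ.2 δ with h | h
      · rw [Formula.realize_inf, Formula.realize_inf] at hv
        have hθv : θ.Realize (v ∘ Fin.castSucc) := by
          have := hv.1
          rwa [Formula.realize_relabel] at this
        have hδv := h N (v ∘ Fin.castSucc) hθv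
        rw [hδ_iff] at hδv
        have hsnoc : Fin.snoc (v ∘ Fin.castSucc) (v (Fin.last k)) = v := by
          funext q
          refine Fin.lastCases ?_ ?_ q
          · simp [Fin.snoc_last]
          · intro p; simp [Fin.snoc_castSucc]
        have := hδv (v (Fin.last k))
        rw [hsnoc] at this
        exact this (Formula.realize_inf.2 hv.2)
      · exact absurd hδc (h (Theory.ModelType.of T M) c hθc)
    intro ψ
    by_cases hψ : ψ.Realize (Fin.snoc c x)
    · left; exact main ψ hψ
    · right
      intro N v hv
      have := main ψ.not (Formula.realize_not.2 hψ) N v hv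
      rwa [Formula.realize_not] at this

end Step

section Project
variable {L : FirstOrder.Language.{0,0}} {M : Type} [L.Structure M] [Nonempty M]

theorem project_lemma {k n : ℕ} (c : Fin k → M) (g : Fin n → Fin k)
    (hg : Function.Injective g) (Φ : L.Formula (Fin k)) (hΦc : Φ.Realize c)
    (hΦ : Isolates (L.completeTheory M) Φ) :
    ∃ Ψ : L.Formula (Fin n), Ψ.Realize (c ∘ g) ∧ Isolates (L.completeTheory M) Ψ := by
  classical
  set T := L.completeTheory M with hT
  let f : Fin k → (Fin n) ⊕ (Fin k) := fun j =>
    if h : ∃ i, g i = j then Sum.inl h.choose else Sum.inr j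
  let Ψ : L.Formula (Fin n) := iExsOld f Φ
  have hfg : ∀ i : Fin n, f (g i) = Sum.inl i := by
    intro i
    have h : ∃ i', g i' = g i := ⟨i, rfl⟩
    simp only [f, dif_pos h]
    exact congrArg Sum.inl (hg h.choose_spec)
  have key : ∀ (N' : Type) [L.Structure N'] (v : Fin n → N') (w : Fin k → N'),
      (fun j => Sum.elim v w (f j)) ∘ g = v := by
    intro N' _ v w
    funext i
    simp [Function.comp, hfg i]
  have hΨ_iff : ∀ (N' : Type) [L.Structure N'] (v : Fin n → N'),
      Ψ.Realize v ↔ ∃ w : Fin k → N', Φ.Realize (fun j => Sum.elim v w (f j)) := by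
    intro N' _ v
    exact realize_iExsOld
  have hΨcg : Ψ.Realize (c ∘ g) := by
    rw [hΨ_iff]
    refine ⟨c, ?_⟩
    have : (fun j => Sum.elim (c ∘ g) c (f j)) = c := by
      funext j
      by_cases h : ∃ i, g i = j
      · simp only [f, dif_pos h, Sum.elim_inl, Function.comp_apply, h.choose_spec]
      · simp only [f, dif_neg h, Sum.elim_inr]
    rwa [this]
  refine ⟨Ψ, hΨcg, ⟨Theory.ModelType.of T M, c ∘ g, hΨcg⟩, ?_⟩
  have main : ∀ ψ : L.Formula (Fin n), ψ.Realize (c ∘ g) →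
      ∀ (N : Theory.ModelType.{0,0,0} T) (v : Fin n → N), Ψ.Realize v → ψ.Realize v := by
    intro ψ hψ N v hv
    rcases hΦ.2 (ψ.relabel g) with h | h
    · rw [hΨ_iff] at hv
      obtain ⟨w, hw⟩ := hv
      have := h N _ hw
      rw [Formula.realize_relabel, key N v w] at this
      exact this
    · exfalso
      refine h (Theory.ModelType.of T M) c hΦc ?_
      exact Formula.realize_relabel.2 hψ
  intro ψ
  by_cases hψ : ψ.Realize (c ∘ g)
  · left; exact main ψ hψ
  · right
    intro N v hv
    have := main ψ.not (Formula.realize_not.2 hψ) N v hv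
    rwa [Formula.realize_not] at this

end Project

/-- the algebraic closure of an atomic set is atomic. -/
theorem statement3 {L : FirstOrder.Language.{0,0}} (M : Type) [L.Structure M] [Nonempty M]
    (A : Set M) (hA : IsAtomicSet L M A) :
    IsAtomicSet L M {b | InAcl L M A b} := by
  classical
  intro n b hb
  choose m' φ' a' ha'A hreal hfin using hb
  set α := (Σ i : Fin n, Fin (m' i)) with hα
  set m := Fintype.card α with hm
  set e : α ≃ Fin m := Fintype.equivFin α with he
  set a : Fin m → M := fun r => a' (e.symm r).1 (e.symm r).2 with ha
  have haA : ∀ r, a r ∈ A := fun r => ha'A _ _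
  have hag : ∀ (i : Fin n) (p : Fin (m' i)), a (e ⟨i, p⟩) = a' i p := by
    intro i p
    show a' (e.symm (e ⟨i, p⟩)).1 (e.symm (e ⟨i, p⟩)).2 = a' i p
    rw [Equiv.symm_apply_apply]
  obtain ⟨θ, hθa, hθ⟩ := hA m a haA
  set b'' : ℕ → M := fun j => if h : j < n then b ⟨j, h⟩ else Classical.arbitrary M with hb''
  set c : (j : ℕ) → Fin (m + j) → M :=
    fun j => Nat.rec (motive := fun j => Fin (m + j) → M) a
      (fun j cj => Fin.snoc cj (b'' j)) j with hc
  have hcsucc : ∀ j : ℕ, c (j+1) = Fin.snoc (c j) (b'' j) := fun _ => rfl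
  have hca : ∀ (j : ℕ) (r : Fin m), c j (Fin.castLE (Nat.le_add_right m j) r) = a r := by
    intro j
    induction j with
    | zero =>
      intro r
      have : Fin.castLE (Nat.le_add_right m 0) r = r := Fin.ext rfl
      rw [this]; rfl
    | succ j ih =>
      intro r
      have : Fin.castLE (Nat.le_add_right m (j+1)) r =
          Fin.castSucc (Fin.castLE (Nat.le_add_right m j) r) := Fin.ext rfl
      rw [this, hcsucc j, Fin.snoc_castSucc, ih r]
  have hcb : ∀ (j i : ℕ) (hij : i < j), c j ⟨m + i, by omega⟩ = b'' i := by
    intro j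
    induction j with
    | zero => intro i hij; omega
    | succ j ih =>
      intro i hij
      rcases Nat.lt_succ_iff_lt_or_eq.1 hij with h | h
      · have : (⟨m + i, by omega⟩ : Fin (m + (j+1))) =
            Fin.castSucc (⟨m + i, by omega⟩ : Fin (m + j)) := Fin.ext rfl
        rw [this, hcsucc j, Fin.snoc_castSucc, ih i h]
      · subst h
        have : (⟨m + i, by omega⟩ : Fin (m + (i+1))) = Fin.last (m + i) := Fin.ext rfl
        rw [this, hcsucc i]
        simp
  have key : ∀ j : ℕ, j ≤ n → ∃ Φ : L.Formula (Fin (m + j)),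
      Φ.Realize (c j) ∧ Isolates (L.completeTheory M) Φ := by
    intro j
    induction j with
    | zero => intro _; exact ⟨θ, hθa, hθ⟩
    | succ j ih =>
      intro hjn
      have hj : j < n := hjn
      obtain ⟨Φ, hΦc, hΦ⟩ := ih (le_of_lt hj)
      set i : Fin n := ⟨j, hj⟩ with hi
      have hbij : b'' j = b i := dif_pos hj
      set hmap : Fin (m' i + 1) → Fin (m + j + 1) :=
        Fin.snoc (fun p => Fin.castSucc (Fin.castLE (Nat.le_add_right m j) (e ⟨i, p⟩)))
          (Fin.last (m + j)) with hhmap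
      have hcomp : ∀ y : M, (Fin.snoc (c j) y : Fin (m+j+1) → M) ∘ hmap =
          Fin.snoc (a' i) y := by
        intro y
        funext q
        refine Fin.lastCases ?_ ?_ q
        · simp [hhmap, Fin.snoc_last]
        · intro p
          simp only [Function.comp_apply, hhmap, Fin.snoc_castSucc]
          rw [hca j, hag i p]
      have hrel : ∀ y : M, ((φ' i).relabel hmap).Realize (Fin.snoc (c j) y) ↔
          (φ' i).Realize (Fin.snoc (a' i) y) := by
        intro y
        rw [Formula.realize_relabel, hcomp y]
      obtain ⟨Φ', hΦ'c, hΦ'⟩ := step_lemma (c j) Φ hΦc hΦ (b'' j) ((φ' i).relabel hmap)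
        (by rw [hrel, hbij]; exact hreal i)
        (by
          have : {y : M | ((φ' i).relabel hmap).Realize (Fin.snoc (c j) y)} =
              {y : M | (φ' i).Realize (Fin.snoc (a' i) y)} := by
            ext y; exact hrel y
          rw [this]; exact hfin i)
      exact ⟨Φ', by rw [hcsucc j]; exact hΦ'c, hΦ'⟩
  obtain ⟨Φ, hΦc, hΦ⟩ := key n le_rfl
  set g : Fin n → Fin (m + n) := fun i => ⟨m + i, by omega⟩ with hg
  have hginj : Function.Injective g := by
    intro i₁ i₂ h
    have := congrArg Fin.val h
    simp only [hg] at this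
    exact Fin.ext (by omega)
  obtain ⟨Ψ, hΨ, hΨiso⟩ := project_lemma (c n) g hginj Φ hΦc hΦ
  have : (c n) ∘ g = b := by
    funext i
    have := hcb n i i.isLt
    simp only [Function.comp_apply, hg]
    rw [this, hb'']
    simp [i.isLt]
  rw [this] at hΨ
  exact ⟨Ψ, hΨ, hΨiso⟩
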